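/- Let I be the ideal in the polynomial ring C[z_0,...,z_n] generated by all monomials z_i z_j with 0 ≤ i < j ≤ n. Then for every k ≥ 1, the k-th power I^k is generated by the monomials z^γ with |γ| = 2k and γ_j ≤ k for all 0 ≤ j ≤ n. -/

import Mathlib

open MvPolynomial

private lemma XmulX (n : ℕ) (i j : Fin (n+1)) :
    (X i * X j : MvPolynomial (Fin (n+1)) ℂ)
      = monomial (Finsupp.single i 1 + Finsupp.single j 1) 1 := by
  rw [X, X, monomial_mul, one_mul]

private lemma sum_pair (n : ℕ) (i j : Fin (n+1)) :
    ∑ x, ((Finsupp.single i 1 + Finsupp.single j 1 : Fin (n+1) →₀ ℕ)) x = 2 := by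
  simp only [Finsupp.add_apply, Finsupp.single_apply]
  rw [Finset.sum_add_distrib]
  simp [Finset.sum_ite_eq]

private lemma sum_add_pair (n : ℕ) (γ : Fin (n+1) →₀ ℕ) (i j : Fin (n+1)) :
    ∑ x, ((γ + (Finsupp.single i 1 + Finsupp.single j 1) : Fin (n+1) →₀ ℕ)) x
      = (∑ x, γ x) + 2 := by
  simp only [Finsupp.add_apply]
  rw [Finset.sum_add_distrib]
  congr 1
  exact sum_pair n i j

private lemma pair_le (n : ℕ) (γ : Fin (n+1) →₀ ℕ) (i j : Fin (n+1)) (hij : i ≠ j)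
    (hi : 1 ≤ γ i) (hj : 1 ≤ γ j) :
    (Finsupp.single i 1 + Finsupp.single j 1 : Fin (n+1) →₀ ℕ) ≤ γ := by
  rw [Finsupp.le_def]
  intro l
  simp only [Finsupp.add_apply, Finsupp.single_apply]
  rcases eq_or_ne i l with rfl | h1
  · rw [if_pos rfl, if_neg (Ne.symm hij)]; omega
  rcases eq_or_ne j l with rfl | h2
  · rw [if_neg h1, if_pos rfl]; omega
  · rw [if_neg h1, if_neg h2]; omega

private lemma pair_apply_le (n : ℕ) (γ : Fin (n+1) →₀ ℕ) (i j l : Fin (n+1)) (hij : i ≠ j)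
    (k : ℕ) (hγ : ∀ x, γ x ≤ k) :
    (γ + (Finsupp.single i 1 + Finsupp.single j 1) : Fin (n+1) →₀ ℕ) l ≤ k + 1 := by
  have h := hγ l
  simp only [Finsupp.add_apply, Finsupp.single_apply]
  rcases eq_or_ne i l with rfl | h1
  · rw [if_pos rfl, if_neg (Ne.symm hij)]; omega
  rcases eq_or_ne j l with rfl | h2
  · rw [if_neg h1, if_pos rfl]; omega
  · rw [if_neg h1, if_neg h2]; omega

/-- Hard direction: each monomial with `|γ| = 2k`, entries `≤ k`, lies in `I^k`. -/
private lemma key (n : ℕ) : ∀ (k : ℕ) (γ : Fin (n + 1) →₀ ℕ),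
    (∑ j, γ j) = 2 * k → (∀ j, γ j ≤ k) →
    monomial γ (1 : ℂ) ∈ (Ideal.span {m : MvPolynomial (Fin (n + 1)) ℂ |
        ∃ i j : Fin (n + 1), i < j ∧ m = X i * X j}) ^ k := by
  intro k
  induction k with
  | zero =>
    intro γ hsum hle
    have hγ : γ = 0 := by
      ext j; exact Nat.le_zero.mp (hle j)
    subst hγ
    simp [Ideal.one_eq_top]
  | succ k ih =>
    intro γ hsum hle
    -- pick i maximizing γ
    obtain ⟨i, -, hi_max⟩ := Finset.exists_max_image Finset.univ γ ⟨0, Finset.mem_univ 0⟩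
    have hi_max' : ∀ l, γ l ≤ γ i := fun l => hi_max l (Finset.mem_univ l)
    have hsplit : γ i + ∑ l ∈ Finset.univ.erase i, γ l = 2 * (k + 1) := by
      rw [Finset.add_sum_erase _ γ (Finset.mem_univ i)]; exact hsum
    have hrest : k + 1 ≤ ∑ l ∈ Finset.univ.erase i, γ l := by
      have := hle i; omega
    have herase_ne : ∃ l ∈ Finset.univ.erase i, 1 ≤ γ l := by
      by_contra h
      push_neg at h
      have : ∑ l ∈ Finset.univ.erase i, γ l = 0 :=
        Finset.sum_eq_zero fun l hl => by have := h l hl; omega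
      omega
    obtain ⟨l₀, hl₀m, hl₀⟩ := herase_ne
    obtain ⟨j, hjm, hj_max⟩ := Finset.exists_max_image (Finset.univ.erase i) γ ⟨l₀, hl₀m⟩
    have hij : i ≠ j := (Finset.ne_of_mem_erase hjm).symm
    have hγj : 1 ≤ γ j := le_trans hl₀ (hj_max l₀ hl₀m)
    have hγi : 1 ≤ γ i := le_trans hγj (hi_max' j)
    -- define δ
    set δ : Fin (n + 1) →₀ ℕ := γ - (Finsupp.single i 1 + Finsupp.single j 1) with hδ
    have hγeq : γ = δ + (Finsupp.single i 1 + Finsupp.single j 1) := by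
      rw [hδ, tsub_add_cancel_of_le (pair_le n γ i j hij hγi hγj)]
    have hδval : ∀ l, δ l = γ l - (if i = l then 1 else 0) - (if j = l then 1 else 0) := by
      intro l
      rw [hδ]
      simp [Finsupp.single_apply, Nat.sub_sub]
    -- δ entries bounded by k
    have hδle : ∀ l, δ l ≤ k := by
      intro l
      rcases eq_or_ne i l with rfl | hli
      · have := hle i; rw [hδval]; simp [Ne.symm hij]; omega
      rcases eq_or_ne j l with rfl | hlj
      · have := hle j; rw [hδval]; simp [hij]; omega
      · rw [hδval]; simp only [if_neg hli, if_neg hlj]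
        by_contra h
        push_neg at h
        have hγl : k + 1 ≤ γ l := by omega
        have hγi' : k + 1 ≤ γ i := le_trans hγl (hi_max' l)
        have hγj' : k + 1 ≤ γ j :=
          le_trans hγl (hj_max l (Finset.mem_erase.mpr ⟨Ne.symm hli, Finset.mem_univ l⟩))
        have hsum3 : ∑ x ∈ ({i, j, l} : Finset (Fin (n+1))), γ x ≤ 2 * (k + 1) := by
          rw [← hsum]
          exact Finset.sum_le_sum_of_subset (Finset.subset_univ _)
        rw [Finset.sum_insert (by simp [hij, hli]),
            Finset.sum_insert (by simp [hlj]), Finset.sum_singleton] at hsum3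
        omega
    have hδsum : ∑ x, δ x = 2 * k := by
      have h := hsum
      rw [hγeq, sum_add_pair] at h
      omega
    -- conclude
    have hmem : monomial δ (1:ℂ) ∈ (Ideal.span {m : MvPolynomial (Fin (n + 1)) ℂ |
        ∃ i j : Fin (n + 1), i < j ∧ m = X i * X j}) ^ k := ih δ hδsum hδle
    have hgen : (X i * X j : MvPolynomial (Fin (n+1)) ℂ) ∈
        Ideal.span {m : MvPolynomial (Fin (n + 1)) ℂ |
        ∃ i j : Fin (n + 1), i < j ∧ m = X i * X j} := by
      apply Ideal.subset_span
      rcases lt_or_gt_of_ne hij with h | h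
      · exact ⟨i, j, h, rfl⟩
      · exact ⟨j, i, h, (mul_comm _ _)⟩
    have heq : monomial γ (1:ℂ) = monomial δ 1 * (X i * X j) := by
      rw [XmulX, monomial_mul, one_mul, ← hγeq]
    rw [heq, pow_succ]
    exact Ideal.mul_mem_mul hmem hgen

/-- The `k`-th power of the ideal generated by the monomials `z_i z_j`, `i < j`, in
`ℂ[z_0, …, z_n]` is generated by the monomials `z^γ` with `|γ| = 2k` and `γ_j ≤ k` for all `j`. -/
theorem power_of_squarefree_quadratic_ideal (n k : ℕ) (hk : 1 ≤ k) :
    (Ideal.span {m : MvPolynomial (Fin (n + 1)) ℂ |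
        ∃ i j : Fin (n + 1), i < j ∧ m = X i * X j}) ^ k =
      Ideal.span {m : MvPolynomial (Fin (n + 1)) ℂ |
        ∃ γ : Fin (n + 1) →₀ ℕ, (γ.sum fun _ e => e) = 2 * k ∧ (∀ j, γ j ≤ k) ∧
          m = monomial γ 1} := by
  have hsum_eq : ∀ (γ : Fin (n+1) →₀ ℕ), (γ.sum fun _ e => e) = ∑ j, γ j :=
    fun γ => Finsupp.sum_fintype _ _ (fun _ => rfl)
  apply le_antisymm
  · -- I^k ≤ span T_k, by induction on k ≥ 1
    induction k with
    | zero => omega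
    | succ k ih =>
      rcases Nat.eq_or_lt_of_le hk with h1 | h1
      · -- k + 1 = 1
        have hk0 : k = 0 := by omega
        subst hk0
        rw [pow_one, Ideal.span_le]
        rintro m ⟨i, j, hij, rfl⟩
        apply Ideal.subset_span
        refine ⟨Finsupp.single i 1 + Finsupp.single j 1, ?_, ?_, (XmulX n i j)⟩
        · rw [hsum_eq, sum_pair]
        · intro l
          have h := pair_apply_le n 0 i j l (ne_of_lt hij) 0 (fun _ => le_rfl)
          simpa using h
      · have hk' : 1 ≤ k := by omega
        have hIH := ih hk'
        rw [pow_succ]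
        calc _ ≤ (Ideal.span {m : MvPolynomial (Fin (n + 1)) ℂ |
              ∃ γ : Fin (n + 1) →₀ ℕ, (γ.sum fun _ e => e) = 2 * k ∧ (∀ j, γ j ≤ k) ∧
                m = monomial γ 1}) *
              Ideal.span {m : MvPolynomial (Fin (n + 1)) ℂ |
                ∃ i j : Fin (n + 1), i < j ∧ m = X i * X j} :=
            Ideal.mul_mono hIH le_rfl
          _ ≤ _ := by
            rw [Ideal.span_mul_span, Ideal.span_le]
            rintro p hp
            simp only [Set.mem_mul] at hp
            obtain ⟨a, ⟨γ, hγsum, hγle, rfl⟩, b, ⟨i, j, hij, rfl⟩, rfl⟩ := hp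
            apply Ideal.subset_span
            refine ⟨γ + (Finsupp.single i 1 + Finsupp.single j 1), ?_, ?_, ?_⟩
            · rw [hsum_eq] at hγsum ⊢
              rw [sum_add_pair, hγsum]
              ring
            · exact fun l => pair_apply_le n γ i j l (ne_of_lt hij) k hγle
            · rw [XmulX, monomial_mul, one_mul]
  · rw [Ideal.span_le]
    rintro m ⟨γ, hγsum, hγle, rfl⟩
    rw [hsum_eq] at hγsum
    exact key n k γ hγsum hγle
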